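/- (Projected Gradient Bound, PGB) Fix γ ∈ (0,1], λ > 0, a finite index set T, and symmetric matrices H_t ∈ ℝ^{d×d} (t ∈ T). Let M ⪰ O be any feasible solution, let M* be optimal for λ, i.e., M* ⪰ O and P_λ(M*) ≤ P_λ(M') for all M' ⪰ O, and set Q := M − (1/(2λ))∇P_λ(M). Then ‖M* − [Q]_+‖_F² ≤ ((1/(2λ))‖∇P_λ(M)‖_F)² − ‖[Q]_−‖_F². -/

import Mathlib

open scoped BigOperators
open scoped Matrix

/-- Frobenius inner product ⟨A,B⟩ = tr(Aᵀ B). -/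
noncomputable def frob {d : ℕ} (A B : Matrix (Fin d) (Fin d) ℝ) : ℝ :=
  Matrix.trace (Aᵀ * B)

/-- Frobenius norm ‖A‖_F = √⟨A,A⟩. -/
noncomputable def frobNorm {d : ℕ} (A : Matrix (Fin d) (Fin d) ℝ) : ℝ :=
  Real.sqrt (frob A A)

/-- Smoothed hinge loss ℓ_γ. -/
noncomputable def shinge (γ x : ℝ) : ℝ :=
  if 1 < x then 0 else if 1 - γ ≤ x then (1 - x) ^ 2 / (2 * γ) else 1 - x - γ / 2

/-- Derivative of the smoothed hinge loss ℓ_γ'. -/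
noncomputable def shinge' (γ x : ℝ) : ℝ :=
  if 1 < x then 0 else if 1 - γ ≤ x then -(1 - x) / γ else -1

/-- Primal objective P_λ(M) = Σ_t ℓ_γ(⟨M,H_t⟩) + (λ/2)‖M‖_F². -/
noncomputable def Pobj {d : ℕ} {ι : Type*} (γ lam : ℝ) (T : Finset ι)
    (H : ι → Matrix (Fin d) (Fin d) ℝ) (M : Matrix (Fin d) (Fin d) ℝ) : ℝ :=
  (∑ t ∈ T, shinge γ (frob M (H t))) + lam / 2 * frobNorm M ^ 2

/-- Gradient ∇P_λ(M) = Σ_t ℓ_γ'(⟨M,H_t⟩) H_t + λ M. -/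
noncomputable def gradP {d : ℕ} {ι : Type*} (γ lam : ℝ) (T : Finset ι)
    (H : ι → Matrix (Fin d) (Fin d) ℝ) (M : Matrix (Fin d) (Fin d) ℝ) :
    Matrix (Fin d) (Fin d) ℝ :=
  (∑ t ∈ T, shinge' γ (frob M (H t)) • H t) + lam • M

/-! ### Auxiliary lemmas on the Frobenius inner product -/

lemma frob_eq_sum {d : ℕ} (A B : Matrix (Fin d) (Fin d) ℝ) :
    frob A B = ∑ i, ∑ j, A j i * B j i := by
  rw [frob, Matrix.trace]
  simp only [Matrix.diag, Matrix.mul_apply, Matrix.transpose_apply]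

lemma frob_comm {d : ℕ} (A B : Matrix (Fin d) (Fin d) ℝ) : frob A B = frob B A := by
  simp [frob_eq_sum, mul_comm]

lemma frob_add_left {d : ℕ} (A B C : Matrix (Fin d) (Fin d) ℝ) :
    frob (A + B) C = frob A C + frob B C := by
  simp [frob_eq_sum, Matrix.add_apply, add_mul, Finset.sum_add_distrib]

lemma frob_add_right {d : ℕ} (A B C : Matrix (Fin d) (Fin d) ℝ) :
    frob A (B + C) = frob A B + frob A C := by
  rw [frob_comm, frob_add_left, frob_comm B A, frob_comm C A]

lemma frob_neg_left {d : ℕ} (A B : Matrix (Fin d) (Fin d) ℝ) :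
    frob (-A) B = -frob A B := by
  simp [frob_eq_sum, Matrix.neg_apply, Finset.sum_neg_distrib]

lemma frob_neg_right {d : ℕ} (A B : Matrix (Fin d) (Fin d) ℝ) :
    frob A (-B) = -frob A B := by
  rw [frob_comm, frob_neg_left, frob_comm B A]

lemma frob_sub_left {d : ℕ} (A B C : Matrix (Fin d) (Fin d) ℝ) :
    frob (A - B) C = frob A C - frob B C := by
  rw [sub_eq_add_neg, frob_add_left, frob_neg_left, sub_eq_add_neg]

lemma frob_sub_right {d : ℕ} (A B C : Matrix (Fin d) (Fin d) ℝ) :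
    frob A (B - C) = frob A B - frob A C := by
  rw [frob_comm, frob_sub_left, frob_comm B A, frob_comm C A]

lemma frob_smul_left {d : ℕ} (c : ℝ) (A B : Matrix (Fin d) (Fin d) ℝ) :
    frob (c • A) B = c * frob A B := by
  simp [frob_eq_sum, Matrix.smul_apply, Finset.mul_sum, mul_assoc]

lemma frob_smul_right {d : ℕ} (c : ℝ) (A B : Matrix (Fin d) (Fin d) ℝ) :
    frob A (c • B) = c * frob A B := by
  rw [frob_comm, frob_smul_left, frob_comm B A]

lemma frob_sum_left {d : ℕ} {ι : Type*} (T : Finset ι) (A : ι → Matrix (Fin d) (Fin d) ℝ)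
    (B : Matrix (Fin d) (Fin d) ℝ) :
    frob (∑ t ∈ T, A t) B = ∑ t ∈ T, frob (A t) B := by
  classical
  induction T using Finset.induction with
  | empty => simp [frob_eq_sum]
  | insert _ _ h ih => rw [Finset.sum_insert h, Finset.sum_insert h, frob_add_left, ih]

lemma frob_self_nonneg {d : ℕ} (A : Matrix (Fin d) (Fin d) ℝ) : 0 ≤ frob A A := by
  rw [frob_eq_sum]
  exact Finset.sum_nonneg fun i _ => Finset.sum_nonneg fun j _ => mul_self_nonneg _

lemma frobNorm_sq {d : ℕ} (A : Matrix (Fin d) (Fin d) ℝ) :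
    frobNorm A ^ 2 = frob A A := Real.sq_sqrt (frob_self_nonneg A)

lemma frob_psd_nonneg {d : ℕ} {A B : Matrix (Fin d) (Fin d) ℝ}
    (hA : A.PosSemidef) (hB : B.PosSemidef) : 0 ≤ frob A B := by
  obtain ⟨C, hC⟩ : ∃ C : Matrix (Fin d) (Fin d) ℝ, A = Cᴴ * C := by
    open scoped MatrixOrder Matrix.Norms.L2Operator in
    exact CStarAlgebra.nonneg_iff_eq_star_mul_self.mp hA.nonneg
  obtain ⟨D, hD⟩ : ∃ D : Matrix (Fin d) (Fin d) ℝ, B = Dᴴ * D := by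
    open scoped MatrixOrder Matrix.Norms.L2Operator in
    exact CStarAlgebra.nonneg_iff_eq_star_mul_self.mp hB.nonneg
  have hAs : Aᵀ = A := hA.isHermitian
  have key : frob A B = frob (D * Cᴴ) (D * Cᴴ) := by
    rw [frob, hAs, hC, hD, frob]
    rw [show ((D * Cᴴ)ᵀ : Matrix (Fin d) (Fin d) ℝ) = (D * Cᴴ)ᴴ by rfl]
    rw [Matrix.conjTranspose_mul, Matrix.conjTranspose_conjTranspose]
    rw [show Cᴴ * C * (Dᴴ * D) = Cᴴ * (C * Dᴴ * D) by noncomm_ring]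
    rw [Matrix.trace_mul_comm, show C * Dᴴ * D * Cᴴ = (C * Dᴴ) * (D * Cᴴ) by noncomm_ring]
  rw [key]; exact frob_self_nonneg _

lemma posSemidef_smul {d : ℕ} {c : ℝ} {A : Matrix (Fin d) (Fin d) ℝ}
    (hc : 0 ≤ c) (hA : A.PosSemidef) : (c • A).PosSemidef := by
  constructor
  · unfold Matrix.IsHermitian at *
    have h := hA.1
    ext i j
    simp only [Matrix.conjTranspose_apply, Matrix.smul_apply, smul_eq_mul, star_trivial]
    have := congrFun (congrFun h i) j
    simp only [Matrix.conjTranspose_apply, star_trivial] at this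
    rw [this]
  · exact (hA.smul hc).2

/-! ### Scalar lemmas on the smoothed hinge loss -/

lemma shinge_nonneg {γ : ℝ} (hγ : 0 < γ) (hγ1 : γ ≤ 1) (x : ℝ) : 0 ≤ shinge γ x := by
  unfold shinge
  split_ifs with h1 h2
  · exact le_refl 0
  · positivity
  · push_neg at h1 h2; linarith

lemma shinge_grad_ineq {γ : ℝ} (hγ : 0 < γ) (hγ1 : γ ≤ 1) (x y : ℝ) :
    shinge γ x + shinge' γ x * (y - x) ≤ shinge γ y := by
  have hy0 : 0 ≤ shinge γ y := shinge_nonneg hγ hγ1 y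
  rcases lt_or_ge 1 x with hx1 | hx1
  · rw [show shinge γ x = 0 by unfold shinge; rw [if_pos hx1],
      show shinge' γ x = 0 by unfold shinge'; rw [if_pos hx1]]
    linarith
  rcases le_or_gt (1 - γ) x with hx2 | hx2
  · rw [show shinge γ x = (1 - x) ^ 2 / (2 * γ) by
        unfold shinge; rw [if_neg (not_lt.mpr hx1), if_pos hx2],
      show shinge' γ x = -(1 - x) / γ by
        unfold shinge'; rw [if_neg (not_lt.mpr hx1), if_pos hx2]]
    rcases lt_or_ge 1 y with hy1 | hy1
    · rw [show shinge γ y = 0 by unfold shinge; rw [if_pos hy1]]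
      rw [← sub_nonneg]
      have key : 0 - ((1 - x) ^ 2 / (2 * γ) + -(1 - x) / γ * (y - x))
          = (γ * (1 - x) * (2 * y - x - 1)) / (2 * γ * γ) := by
        field_simp; ring
      rw [key]
      apply div_nonneg _ (by positivity)
      have := mul_nonneg (show (0:ℝ) ≤ 1 - x by linarith)
        (show (0:ℝ) ≤ 2 * y - x - 1 by linarith)
      nlinarith
    rcases le_or_gt (1 - γ) y with hy2 | hy2
    · rw [show shinge γ y = (1 - y) ^ 2 / (2 * γ) by
          unfold shinge; rw [if_neg (not_lt.mpr hy1), if_pos hy2]]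
      rw [← sub_nonneg]
      have key : (1 - y) ^ 2 / (2 * γ) - ((1 - x) ^ 2 / (2 * γ) + -(1 - x) / γ * (y - x))
          = (x - y) ^ 2 / (2 * γ) := by
        field_simp; ring
      rw [key]; positivity
    · rw [show shinge γ y = 1 - y - γ / 2 by
          unfold shinge; rw [if_neg (not_lt.mpr hy1), if_neg (not_le.mpr hy2)]]
      rw [← sub_nonneg]
      have key : (1 - y - γ / 2) - ((1 - x) ^ 2 / (2 * γ) + -(1 - x) / γ * (y - x))
          = ((γ - (1 - x)) * (2 * (1 - y) - γ - (1 - x))) / (2 * γ) := by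
        field_simp; ring
      rw [key]
      apply div_nonneg _ (by positivity)
      have := mul_nonneg (show (0:ℝ) ≤ γ - (1 - x) by linarith)
        (show (0:ℝ) ≤ 2 * (1 - y) - γ - (1 - x) by linarith)
      linarith
  · rw [show shinge γ x = 1 - x - γ / 2 by
        unfold shinge; rw [if_neg (not_lt.mpr hx1), if_neg (not_le.mpr hx2)],
      show shinge' γ x = -1 by
        unfold shinge'; rw [if_neg (not_lt.mpr hx1), if_neg (not_le.mpr hx2)]]
    rcases lt_or_ge 1 y with hy1 | hy1
    · rw [show shinge γ y = 0 by unfold shinge; rw [if_pos hy1]]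
      linarith
    rcases le_or_gt (1 - γ) y with hy2 | hy2
    · rw [show shinge γ y = (1 - y) ^ 2 / (2 * γ) by
          unfold shinge; rw [if_neg (not_lt.mpr hy1), if_pos hy2]]
      rw [← sub_nonneg]
      have key : (1 - y) ^ 2 / (2 * γ) - (1 - x - γ / 2 + -1 * (y - x))
          = (1 - y - γ) ^ 2 / (2 * γ) := by
        field_simp; ring
      rw [key]; positivity
    · rw [show shinge γ y = 1 - y - γ / 2 by
          unfold shinge; rw [if_neg (not_lt.mpr hy1), if_neg (not_le.mpr hy2)]]
      linarith

lemma shinge_convex {γ : ℝ} (hγ : 0 < γ) (hγ1 : γ ≤ 1) {θ : ℝ} (hθ0 : 0 ≤ θ) (hθ1 : θ ≤ 1)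
    (x y : ℝ) :
    shinge γ ((1 - θ) * x + θ * y) ≤ (1 - θ) * shinge γ x + θ * shinge γ y := by
  have c1 := shinge_grad_ineq hγ hγ1 ((1 - θ) * x + θ * y) x
  have c2 := shinge_grad_ineq hγ hγ1 ((1 - θ) * x + θ * y) y
  nlinarith [mul_le_mul_of_nonneg_left c1 (show (0:ℝ) ≤ 1 - θ by linarith),
    mul_le_mul_of_nonneg_left c2 hθ0]

/-! ### Strong convexity of the objective -/

lemma P_grad_ineq {d : ℕ} {ι : Type*} {γ lam : ℝ}
    (hγ : 0 < γ) (hγ1 : γ ≤ 1) (T : Finset ι)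
    (H : ι → Matrix (Fin d) (Fin d) ℝ) (X Y : Matrix (Fin d) (Fin d) ℝ) :
    Pobj γ lam T H X + frob (gradP γ lam T H X) (Y - X)
      + lam / 2 * frob (Y - X) (Y - X) ≤ Pobj γ lam T H Y := by
  have hgrad : frob (gradP γ lam T H X) (Y - X)
      = (∑ t ∈ T, shinge' γ (frob X (H t)) * (frob Y (H t) - frob X (H t)))
        + lam * frob X (Y - X) := by
    rw [gradP, frob_add_left, frob_sum_left, frob_smul_left]
    congr 1
    refine Finset.sum_congr rfl fun t _ => ?_
    rw [frob_smul_left]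
    congr 1
    rw [frob_comm, frob_sub_left]
  have hquad : lam / 2 * frob Y Y
      = lam / 2 * frob X X + lam * frob X (Y - X) + lam / 2 * frob (Y - X) (Y - X) := by
    simp only [frob_sub_right, frob_sub_left]
    rw [frob_comm Y X]
    ring
  have hsum : ∑ t ∈ T, (shinge γ (frob X (H t))
        + shinge' γ (frob X (H t)) * (frob Y (H t) - frob X (H t)))
      ≤ ∑ t ∈ T, shinge γ (frob Y (H t)) :=
    Finset.sum_le_sum fun t _ => shinge_grad_ineq hγ hγ1 _ _
  rw [Finset.sum_add_distrib] at hsum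
  rw [Pobj, Pobj, frobNorm_sq, frobNorm_sq, hgrad, hquad]
  linarith

lemma P_comb_ineq {d : ℕ} {ι : Type*} {γ lam : ℝ}
    (hγ : 0 < γ) (hγ1 : γ ≤ 1) (T : Finset ι)
    (H : ι → Matrix (Fin d) (Fin d) ℝ) (X Y : Matrix (Fin d) (Fin d) ℝ)
    {θ : ℝ} (hθ0 : 0 ≤ θ) (hθ1 : θ ≤ 1) :
    Pobj γ lam T H ((1 - θ) • X + θ • Y)
      ≤ (1 - θ) * Pobj γ lam T H X + θ * Pobj γ lam T H Y
        - lam / 2 * (θ * (1 - θ)) * frob (Y - X) (Y - X) := by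
  have hlin : ∀ B, frob ((1 - θ) • X + θ • Y) B = (1 - θ) * frob X B + θ * frob Y B := by
    intro B
    rw [frob_add_left, frob_smul_left, frob_smul_left]
  have hsum : ∑ t ∈ T, shinge γ (frob ((1 - θ) • X + θ • Y) (H t))
      ≤ ∑ t ∈ T, ((1 - θ) * shinge γ (frob X (H t)) + θ * shinge γ (frob Y (H t))) := by
    refine Finset.sum_le_sum fun t _ => ?_
    rw [hlin]
    exact shinge_convex hγ hγ1 hθ0 hθ1 _ _
  have hquad : frob ((1 - θ) • X + θ • Y) ((1 - θ) • X + θ • Y)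
      = (1 - θ) * frob X X + θ * frob Y Y - θ * (1 - θ) * frob (Y - X) (Y - X) := by
    simp only [hlin, frob_add_right, frob_smul_right, frob_sub_right, frob_sub_left]
    rw [frob_comm Y X]
    ring
  rw [Pobj, Pobj, Pobj, frobNorm_sq, frobNorm_sq, frobNorm_sq, hquad,
    Finset.sum_add_distrib, ← Finset.mul_sum, ← Finset.mul_sum] at *
  linarith

/-! ### Main theorem -/

/-- Projected Gradient Bound (PGB).  Here Qplus = [Q]_+ and Qminus = [Q]_− are
given through the unique orthogonal PSD/NSD decomposition of
Q = M − (1/(2λ))∇P_λ(M). -/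
theorem projected_gradient_bound {d : ℕ} {ι : Type*} (γ lam : ℝ)
    (hγ : 0 < γ) (hγ1 : γ ≤ 1) (hlam : 0 < lam)
    (T : Finset ι) (H : ι → Matrix (Fin d) (Fin d) ℝ)
    (hH : ∀ t ∈ T, (H t).IsSymm)
    (M Mstar Qplus Qminus : Matrix (Fin d) (Fin d) ℝ)
    (hM : M.PosSemidef) (hMstar : Mstar.PosSemidef)
    (hopt : ∀ M' : Matrix (Fin d) (Fin d) ℝ, M'.PosSemidef →
      Pobj γ lam T H Mstar ≤ Pobj γ lam T H M')
    (hdecomp : M - (1 / (2 * lam)) • gradP γ lam T H M = Qplus + Qminus)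
    (hplus : Qplus.PosSemidef) (hminus : (-Qminus).PosSemidef)
    (horth : frob Qplus Qminus = 0) :
    frobNorm (Mstar - Qplus) ^ 2 ≤
      ((1 / (2 * lam)) * frobNorm (gradP γ lam T H M)) ^ 2 - frobNorm Qminus ^ 2 := by
  classical
  set G := gradP γ lam T H M with hG
  set s : ℝ := 1 / (2 * lam) with hs
  have hs0 : 0 < s := by positivity
  set Δ := Mstar - M with hΔ
  -- optimality gap via strong convexity
  have hgap : lam / 2 * frob Δ Δ ≤ Pobj γ lam T H M - Pobj γ lam T H Mstar := by
    have hkey : ∀ θ : ℝ, 0 < θ → θ ≤ 1 →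
        lam / 2 * (1 - θ) * frob Δ Δ ≤ Pobj γ lam T H M - Pobj γ lam T H Mstar := by
      intro θ hθ0 hθ1
      have hpsd : ((1 - θ) • Mstar + θ • M).PosSemidef :=
        (posSemidef_smul (by linarith) hMstar).add (posSemidef_smul hθ0.le hM)
      have h1 := hopt _ hpsd
      have h2 := P_comb_ineq (lam := lam) hγ hγ1 T H Mstar M hθ0.le hθ1
      have hΔfrob : frob (M - Mstar) (M - Mstar) = frob Δ Δ := by
        rw [hΔ, show M - Mstar = -(Mstar - M) from (neg_sub Mstar M).symm, frob_neg_left, frob_neg_right]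
        ring
      rw [hΔfrob] at h2
      have := h1.trans h2
      nlinarith [this, hθ0]
    have hΔnn : 0 ≤ frob Δ Δ := frob_self_nonneg Δ
    refine le_of_forall_pos_le_add fun ε hε => ?_
    set c := lam / 2 * frob Δ Δ with hc
    have hcnn : 0 ≤ c := by positivity
    set θ := min 1 (ε / (c + 1)) with hθ
    have hθ0 : 0 < θ := lt_min one_pos (by positivity)
    have hθ1 : θ ≤ 1 := min_le_left _ _
    have h := hkey θ hθ0 hθ1
    have hθc : θ * c ≤ ε := by
      calc θ * c ≤ (ε / (c + 1)) * c := by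
            apply mul_le_mul_of_nonneg_right (min_le_right _ _) hcnn
        _ ≤ ε := by
            rw [div_mul_eq_mul_div, div_le_iff₀ (by linarith)]
            nlinarith
    have : lam / 2 * (1 - θ) * frob Δ Δ = c - θ * c := by rw [hc]; ring
    linarith [h, this ▸ h]
  -- gradient inequality
  have hgradineq := P_grad_ineq (lam := lam) hγ hγ1 T H M Mstar
  have hGΔ : frob G Δ ≤ -lam * frob Δ Δ := by
    rw [← hΔ] at hgradineq
    linarith
  -- expansion of ‖Mstar - Q‖²
  have hQ : Mstar - (Qplus + Qminus) = Δ + s • G := by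
    rw [← hdecomp, hΔ]; abel
  have hA1 : frob (Mstar - (Qplus + Qminus)) (Mstar - (Qplus + Qminus))
      = frob Δ Δ + 2 * s * frob G Δ + s ^ 2 * frob G G := by
    rw [hQ, frob_add_left, frob_add_right, frob_add_right, frob_smul_left, frob_smul_right,
      frob_smul_left, frob_smul_right, frob_comm Δ G]
    ring
  have hA2 : frob (Mstar - (Qplus + Qminus)) (Mstar - (Qplus + Qminus))
      = frob (Mstar - Qplus) (Mstar - Qplus) - 2 * frob (Mstar - Qplus) Qminus
        + frob Qminus Qminus := by
    rw [show Mstar - (Qplus + Qminus) = (Mstar - Qplus) - Qminus by abel]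
    simp only [frob_sub_left, frob_sub_right]
    rw [frob_comm Qminus Mstar, frob_comm Qminus Qplus]
    ring
  have hcross : frob (Mstar - Qplus) Qminus ≤ 0 := by
    rw [frob_sub_left, horth, sub_zero]
    have := frob_psd_nonneg hMstar hminus
    rw [frob_neg_right] at this
    linarith
  have hslam : 2 * s * lam = 1 := by
    rw [hs]; field_simp
  have key : frob (Mstar - Qplus) (Mstar - Qplus) + frob Qminus Qminus
      ≤ s ^ 2 * frob G G := by
    have h1 : frob Δ Δ + 2 * s * frob G Δ + s ^ 2 * frob G G ≤ s ^ 2 * frob G G := by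
      have : 2 * s * frob G Δ ≤ 2 * s * (-lam * frob Δ Δ) := by
        apply mul_le_mul_of_nonneg_left hGΔ (by positivity)
      nlinarith [frob_self_nonneg Δ]
    have h2 : frob (Mstar - Qplus) (Mstar - Qplus) - 2 * frob (Mstar - Qplus) Qminus
        + frob Qminus Qminus = frob Δ Δ + 2 * s * frob G Δ + s ^ 2 * frob G G :=
      hA2.symm.trans hA1
    linarith
  rw [frobNorm_sq, frobNorm_sq, mul_pow, frobNorm_sq]
  linarith
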